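/- Let G be a compact group, γ a Cayley function, w(x,y)=γ(xy⁻¹), and π an irreducible unitary representation of G with coefficient functions π_{i,j}(x) = ⟨π(x)e_i, e_j⟩. Suppose Z = (z_1,…,z_{d_π}) is an eigenvector of the entrywise-conjugated matrix conj(π(γ)) with eigenvalue λ. Then for every 1 ≤ i ≤ d_π, the function φ = Σ_{j=1}^{d_π} z_j π_{i,j} satisfies T_w φ = λ φ. -/

import Mathlib

open MeasureTheory

/-- The matrix `π(γ) = ∫ γ(x) π(x) dx` (entrywise integral). -/
noncomputable def repMat {G : Type*} [Group G] [MeasurableSpace G]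
    (μ : MeasureTheory.Measure G) (γ : G → ℝ) {d : ℕ}
    (π : G →* Matrix.unitaryGroup (Fin d) ℂ) : Matrix (Fin d) (Fin d) ℂ :=
  Matrix.of fun i j => ∫ x, (γ x : ℂ) * ((π x : Matrix (Fin d) (Fin d) ℂ) i j) ∂μ

lemma haar_prob_right_invariant {G : Type*} [Group G] [TopologicalSpace G] [IsTopologicalGroup G]
    [CompactSpace G] [MeasurableSpace G] [BorelSpace G]
    (μ : Measure G) [μ.IsHaarMeasure] [IsProbabilityMeasure μ] :
    μ.IsMulRightInvariant := by
  constructor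
  intro g
  have : IsProbabilityMeasure (Measure.map (· * g) μ) :=
    Measure.isProbabilityMeasure_map (measurable_mul_const g).aemeasurable
  exact Measure.isHaarMeasure_eq_of_isProbabilityMeasure _ μ

lemma haar_prob_inv_invariant {G : Type*} [Group G] [TopologicalSpace G] [IsTopologicalGroup G]
    [CompactSpace G] [MeasurableSpace G] [BorelSpace G]
    (μ : Measure G) [μ.IsHaarMeasure] [IsProbabilityMeasure μ] :
    μ.IsInvInvariant := by
  have h1 : μ.IsMulRightInvariant := haar_prob_right_invariant μ
  have hprob : IsProbabilityMeasure μ.inv :=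
    Measure.isProbabilityMeasure_map measurable_inv.aemeasurable
  have h2 : μ.inv.IsMulLeftInvariant := Measure.inv.instIsMulLeftInvariant
  have h4 : (Measure.map Inv.inv μ).IsOpenPosMeasure :=
    continuous_inv.isOpenPosMeasure_map inv_surjective
  have h3 : μ.inv.IsHaarMeasure :=
    { toIsMulLeftInvariant := h2
      toIsFiniteMeasureOnCompacts := inferInstance
      toIsOpenPosMeasure := h4 }
  exact ⟨Measure.isHaarMeasure_eq_of_isProbabilityMeasure μ.inv μ⟩

/-- Let `w(x,y) = γ(xy⁻¹)` be a Cayley graphon on a compact group `G` and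
`π` a continuous unitary matrix representation, with coefficient functions
`π_{i,j}(x) = ⟨π(x)eᵢ, eⱼ⟩ = (π x)ⱼᵢ`.  If `Z = (z_j)` is an eigenvector of the entrywise
conjugate of `π(γ)` with eigenvalue `λ`, then `φ = Σⱼ zⱼ π_{i,j}` satisfies `T_w φ = λ φ`. -/
theorem stmt_6
    {G : Type*} [Group G] [TopologicalSpace G] [IsTopologicalGroup G]
    [CompactSpace G] [MeasurableSpace G] [BorelSpace G]
    (μ : Measure G) [μ.IsHaarMeasure] [IsProbabilityMeasure μ]
    (γ : G → ℝ) (hmeas : Measurable γ) (h01 : ∀ x, γ x ∈ Set.Icc (0 : ℝ) 1)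
    (hsym : ∀ x, γ x = γ x⁻¹)
    {d : ℕ} (π : G →* Matrix.unitaryGroup (Fin d) ℂ)
    (hcont : Continuous fun g => (π g : Matrix (Fin d) (Fin d) ℂ))
    (lam : ℂ) (z : Fin d → ℂ)
    (hz : Matrix.mulVec ((repMat μ γ π).map (starRingEnd ℂ)) z = lam • z)
    (i : Fin d) :
    ∀ x : G,
      (∫ y, (γ (x * y⁻¹) : ℂ) *
          (∑ j, z j * ((π y : Matrix (Fin d) (Fin d) ℂ) j i)) ∂μ)
        = lam * ∑ j, z j * ((π x : Matrix (Fin d) (Fin d) ℂ) j i) := by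
  have hRI : μ.IsMulRightInvariant := haar_prob_right_invariant μ
  have hII : μ.IsInvInvariant := haar_prob_inv_invariant μ
  -- integrability of entry functions
  have hInt : ∀ j k : Fin d,
      Integrable (fun u => (γ u : ℂ) * ((π u : Matrix (Fin d) (Fin d) ℂ) j k)) μ := by
    intro j k
    have hPm : Measurable fun u => (π u : Matrix (Fin d) (Fin d) ℂ) j k :=
      (hcont.matrix_elem j k).measurable
    refine (integrable_const (1:ℝ)).mono'
      ((Complex.measurable_ofReal.comp hmeas).mul hPm).aestronglyMeasurable
      (ae_of_all _ fun u => ?_)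
    rw [norm_mul]
    have h1 : ‖((γ u : ℝ) : ℂ)‖ ≤ 1 := by
      rw [Complex.norm_real, Real.norm_eq_abs, abs_le]
      exact ⟨by linarith [(h01 u).1], (h01 u).2⟩
    have h2 : ‖(π u : Matrix (Fin d) (Fin d) ℂ) j k‖ ≤ 1 :=
      entry_norm_bound_of_unitary (π u).2 j k
    calc ‖((γ u : ℝ) : ℂ)‖ * ‖(π u : Matrix (Fin d) (Fin d) ℂ) j k‖ ≤ 1 * 1 :=
          mul_le_mul h1 h2 (norm_nonneg _) zero_le_one
      _ = 1 := one_mul 1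
  -- repMat entries
  have hA : ∀ j k : Fin d, repMat μ γ π j k
      = ∫ u, (γ u : ℂ) * ((π u : Matrix (Fin d) (Fin d) ℂ) j k) ∂μ := fun _ _ => rfl
  -- conjugation symmetry of repMat
  have hconj : ∀ j k : Fin d,
      (starRingEnd ℂ) (repMat μ γ π k j) = repMat μ γ π j k := by
    intro j k
    rw [hA, hA, ← integral_conj]
    have hpt : ∀ u : G, (starRingEnd ℂ) ((γ u : ℂ) * ((π u : Matrix (Fin d) (Fin d) ℂ) k j))
        = (fun v => (γ v : ℂ) * ((π v : Matrix (Fin d) (Fin d) ℂ) j k)) u⁻¹ := by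
      intro u
      have e1 : (starRingEnd ℂ) ((π u : Matrix (Fin d) (Fin d) ℂ) k j)
          = ((π u⁻¹ : Matrix (Fin d) (Fin d) ℂ)) j k := by
        rw [map_inv]
        rfl
      rw [map_mul, Complex.conj_ofReal, e1]
      simp only
      rw [← hsym u]
    calc ∫ u, (starRingEnd ℂ) ((γ u : ℂ) * ((π u : Matrix (Fin d) (Fin d) ℂ) k j)) ∂μ
        = ∫ u, (fun v => (γ v : ℂ) * ((π v : Matrix (Fin d) (Fin d) ℂ) j k)) u⁻¹ ∂μ := by
          exact integral_congr_ae (ae_of_all _ hpt)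
      _ = ∫ u, (γ u : ℂ) * ((π u : Matrix (Fin d) (Fin d) ℂ) j k) ∂μ :=
          integral_inv_eq_self (fun v => (γ v : ℂ) * ((π v : Matrix (Fin d) (Fin d) ℂ) j k)) μ
  -- eigenvector equation rewritten
  have hz' : ∀ k : Fin d, ∑ j, repMat μ γ π j k * z j = lam * z k := by
    intro k
    have h := congrFun hz k
    simp only [Matrix.mulVec, Matrix.map_apply, Pi.smul_apply, dotProduct,
      smul_eq_mul] at h
    calc ∑ j, repMat μ γ π j k * z j
        = ∑ j, (starRingEnd ℂ) (repMat μ γ π k j) * z j := by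
          refine Finset.sum_congr rfl fun j _ => ?_
          rw [hconj]
      _ = lam * z k := h
  intro x
  -- step 1: right translation
  have step1 : (∫ y, (γ (x * y⁻¹) : ℂ) *
        (∑ j, z j * ((π y : Matrix (Fin d) (Fin d) ℂ) j i)) ∂μ)
      = ∫ u, (γ (x * (u * x)⁻¹) : ℂ) *
        (∑ j, z j * ((π (u * x) : Matrix (Fin d) (Fin d) ℂ) j i)) ∂μ :=
    (integral_mul_right_eq_self (fun y => (γ (x * y⁻¹) : ℂ) *
        (∑ j, z j * ((π y : Matrix (Fin d) (Fin d) ℂ) j i))) x).symm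
  rw [step1]
  -- step 2: pointwise rewrite of the integrand
  have step2 : ∀ u : G, (γ (x * (u * x)⁻¹) : ℂ) *
        (∑ j, z j * ((π (u * x) : Matrix (Fin d) (Fin d) ℂ) j i))
      = ∑ j, ∑ k, (z j * ((π x : Matrix (Fin d) (Fin d) ℂ) k i)) *
          ((γ u : ℂ) * ((π u : Matrix (Fin d) (Fin d) ℂ) j k)) := by
    intro u
    have harg : x * (u * x)⁻¹ = u⁻¹ := by group
    have hγ : (γ (x * (u * x)⁻¹) : ℂ) = (γ u : ℂ) := by
      rw [harg, ← hsym u]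
    have hm : ∀ j, (π (u * x) : Matrix (Fin d) (Fin d) ℂ) j i
        = ∑ k, ((π u : Matrix (Fin d) (Fin d) ℂ) j k) *
            ((π x : Matrix (Fin d) (Fin d) ℂ) k i) := by
      intro j
      rw [map_mul]
      exact Matrix.mul_apply
    rw [hγ, Finset.mul_sum]
    refine Finset.sum_congr rfl fun j _ => ?_
    rw [hm j, Finset.mul_sum, Finset.mul_sum]
    refine Finset.sum_congr rfl fun k _ => ?_
    ring
  rw [integral_congr_ae (ae_of_all _ step2)]
  -- step 3: interchange sum and integral
  rw [integral_finset_sum _ (fun j _ => integrable_finset_sum _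
    (fun k _ => ((hInt j k).const_mul _)))]
  have step3 : ∀ j : Fin d, (∫ u, ∑ k, (z j * ((π x : Matrix (Fin d) (Fin d) ℂ) k i)) *
          ((γ u : ℂ) * ((π u : Matrix (Fin d) (Fin d) ℂ) j k)) ∂μ)
      = ∑ k, (z j * ((π x : Matrix (Fin d) (Fin d) ℂ) k i)) * repMat μ γ π j k := by
    intro j
    rw [integral_finset_sum _ (fun k _ => ((hInt j k).const_mul _))]
    refine Finset.sum_congr rfl fun k _ => ?_
    rw [MeasureTheory.integral_const_mul, hA]
  rw [Finset.sum_congr rfl (fun j _ => step3 j)]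
  -- step 4: use the eigenvector equation
  rw [Finset.sum_comm]
  rw [Finset.mul_sum]
  refine Finset.sum_congr rfl fun k _ => ?_
  calc ∑ j, (z j * ((π x : Matrix (Fin d) (Fin d) ℂ) k i)) * repMat μ γ π j k
      = (∑ j, repMat μ γ π j k * z j) * ((π x : Matrix (Fin d) (Fin d) ℂ) k i) := by
        rw [Finset.sum_mul]
        refine Finset.sum_congr rfl fun j _ => ?_
        ring
    _ = (lam * z k) * ((π x : Matrix (Fin d) (Fin d) ℂ) k i) := by rw [hz' k]
    _ = lam * (z k * ((π x : Matrix (Fin d) (Fin d) ℂ) k i)) := by ring
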